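/- Let T be a set and let K ⊆ ℝ^T be a compact max-plus convex subset. A closed subset A ⊆ K satisfies conv_I(A) = A if and only if A is max-plus convex; that is, the family of I-convex subsets of (K, β_K) coincides with the family of closed max-plus convex subsets of K. -/

import Mathlib

/-- An idempotent (Maslov) probability measure on `X`:
a functional on `C(X, ℝ)` preserving constants, translation by constants,
and finite maxima. -/
def IsIdempotentMeasure {X : Type*} [TopologicalSpace X] (μ : C(X, ℝ) → ℝ) : Prop :=
  μ 1 = 1 ∧
  (∀ (l : ℝ) (φ : C(X, ℝ)), μ (ContinuousMap.const X l + φ) = l + μ φ) ∧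
  (∀ ψ φ : C(X, ℝ), μ (ψ ⊔ φ) = max (μ ψ) (μ φ))
/-- The space `IX` of idempotent measures, topologized as a subspace of `ℝ^{C(X)}`. -/
abbrev IspX (X : Type*) [TopologicalSpace X] := {μ : C(X, ℝ) → ℝ // IsIdempotentMeasure μ}
/-- A subset `K ⊆ ℝ^T` is max-plus convex if for all `a, b ∈ K` and
`λ ∈ [-∞, 0]`, the coordinatewise maximum `(λ + a) ∨ b` belongs to `K`
(with `-∞ + x = -∞` and `max(-∞, x) = x`). -/
def MaxPlusConvexSet {T : Type*} (K : Set (T → ℝ)) : Prop :=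
  ∀ a ∈ K, ∀ b ∈ K, ∀ l : EReal, l ≤ 0 →
    ∃ c ∈ K, ∀ t : T, (c t : EReal) = (l + (a t : EReal)) ⊔ (b t : EReal)

/-- For `t ∈ T`, the coordinate projection `f_t = pr_t|_K ∈ C(K)`. -/
noncomputable def coordMap {T : Type*} (K : Set (T → ℝ)) (t : T) : C(↥K, ℝ) :=
  ⟨fun k => (k : T → ℝ) t, (continuous_apply t).comp continuous_subtype_val⟩

/-- The equivalence relation on `Z` collapsing the subset `A` to one point:
classes are the singletons `{x}`, `x ∉ A`, and the set `A`. -/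
def collapseSetoid {Z : Type*} (A : Set Z) : Setoid Z where
  r x y := x = y ∨ (x ∈ A ∧ y ∈ A)
  iseqv := ⟨fun _ => Or.inl rfl,
    fun h => h.elim (fun e => Or.inl e.symm) (fun h' => Or.inr ⟨h'.2, h'.1⟩),
    fun h1 h2 => by
      rcases h1 with rfl | h1
      · exact h2
      · rcases h2 with rfl | h2
        · exact Or.inr h1
        · exact Or.inr ⟨h1.1, h2.2⟩⟩

/-- The quotient space `Z/A` obtained by collapsing `A` to a point. -/
def QuotSp {Z : Type*} (A : Set Z) : Type _ := Quotient (collapseSetoid A)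

/-- The quotient map `χ_A : Z → Z/A`. -/
def qmk {Z : Type*} (A : Set Z) (z : Z) : QuotSp A := Quotient.mk (collapseSetoid A) z

/-- The quotient topology on `Z/A`. -/
instance {Z : Type*} [TopologicalSpace Z] (A : Set Z) : TopologicalSpace (QuotSp A) :=
  TopologicalSpace.coinduced (qmk A) inferInstance

/-- The quotient map `χ_A` as a continuous map. -/
def qmkC {Z : Type*} [TopologicalSpace Z] (A : Set Z) : C(Z, QuotSp A) :=
  ⟨qmk A, continuous_coinduced_rng⟩

section AuxIM

variable {X : Type*} [TopologicalSpace X]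

lemma im_const {μ : C(X, ℝ) → ℝ} (h : IsIdempotentMeasure μ) (r : ℝ) :
    μ (ContinuousMap.const X r) = r := by
  have h2 := h.2.1 (r - 1) 1
  have e : ContinuousMap.const X (r - 1) + 1 = ContinuousMap.const X r := by
    ext x; simp
  rw [e, h.1] at h2
  rw [h2]; ring

lemma im_mono {μ : C(X, ℝ) → ℝ} (h : IsIdempotentMeasure μ) {φ ψ : C(X, ℝ)}
    (hle : φ ≤ ψ) : μ φ ≤ μ ψ := by
  have h3 := h.2.2 φ ψ
  rw [sup_eq_right.mpr hle] at h3
  rw [h3]; exact le_max_left _ _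

lemma im_add_const {μ : C(X, ℝ) → ℝ} (h : IsIdempotentMeasure μ) (φ : C(X, ℝ)) (c : ℝ) :
    μ (φ + ContinuousMap.const X c) = μ φ + c := by
  rw [add_comm φ, h.2.1, add_comm]

lemma im_sup' {μ : C(X, ℝ) → ℝ} (h : IsIdempotentMeasure μ) {ι : Type*}
    {S : Finset ι} (hS : S.Nonempty) (f : ι → C(X, ℝ)) :
    μ (S.sup' hS f) = S.sup' hS fun i => μ (f i) := by
  induction hS using Finset.Nonempty.cons_induction with
  | singleton a => simp
  | cons a s ha hs ih =>
    rw [Finset.sup'_cons hs, Finset.sup'_cons hs, h.2.2, ih]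

lemma im_factor {μ : C(X, ℝ) → ℝ} {A : Set X}
    (hμA : ∀ x₀ ∈ A, ∀ ψ : C(QuotSp A, ℝ), μ (ψ.comp (qmkC A)) = ψ (qmk A x₀))
    {x₀ : X} (hx₀ : x₀ ∈ A) (φ : C(X, ℝ)) (hφ : ∀ x ∈ A, φ x = 0) :
    μ φ = 0 := by
  have hresp : ∀ x y, (collapseSetoid A).r x y → φ x = φ y := by
    rintro x y (rfl | ⟨hx, hy⟩)
    · rfl
    · rw [hφ x hx, hφ y hy]
  have hg : Continuous (Quotient.lift (φ : X → ℝ) hresp : QuotSp A → ℝ) := by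
    apply continuous_coinduced_dom.mpr
    exact φ.continuous
  have h := hμA x₀ hx₀ ⟨Quotient.lift (φ : X → ℝ) hresp, hg⟩
  have e : (⟨Quotient.lift (φ : X → ℝ) hresp, hg⟩ : C(QuotSp A, ℝ)).comp (qmkC A) = φ := by
    ext x; rfl
  rw [e] at h
  rw [h]
  exact hφ x₀ hx₀

end AuxIM

section AuxList

lemma foldr_max_le {L : List ℝ} {b m : ℝ} (hb : b ≤ m) (hL : ∀ r ∈ L, r ≤ m) :
    L.foldr max b ≤ m := by
  induction L with
  | nil => exact hb
  | cons x xs ih =>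
    exact max_le (hL x (by simp)) (ih fun r hr => hL r (by simp [hr]))

lemma le_foldr_max_of_mem {L : List ℝ} {b r : ℝ} (hr : r ∈ L) :
    r ≤ L.foldr max b := by
  induction L with
  | nil => simp at hr
  | cons x xs ih =>
    rcases List.mem_cons.mp hr with rfl | h
    · exact le_max_left _ _
    · exact (ih h).trans (le_max_right _ _)

lemma ereal_coe_max (x y : ℝ) : ((max x y : ℝ) : EReal) = max (x : EReal) (y : EReal) :=
  EReal.coe_strictMono.monotone.map_max

end AuxList

lemma combo_mem {T : Type*} {K : Set (T → ℝ)} {A : Set ↥K}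
    (hconvA : ∀ a ∈ A, ∀ b ∈ A, ∀ l : EReal, l ≤ 0 →
      ∃ c ∈ A, ∀ t : T,
        ((c : T → ℝ) t : EReal) = (l + ((a : T → ℝ) t : EReal)) ⊔ ((b : T → ℝ) t : EReal))
    (L : List (ℝ × ↥K)) (hL : ∀ p ∈ L, p.1 ≤ 0 ∧ p.2 ∈ A)
    {x : ↥K} (hx : x ∈ A) :
    ∃ b ∈ A, ∀ s, ((b : T → ℝ) s) =
      (L.map fun p => p.1 + ((p.2 : T → ℝ)) s).foldr max ((x : T → ℝ) s) := by
  induction L with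
  | nil => exact ⟨x, hx, fun s => rfl⟩
  | cons p ps ih =>
    obtain ⟨b', hb', hspec⟩ := ih fun q hq => hL q (by simp [hq])
    have hp := hL p (by simp)
    obtain ⟨c, hc, hcspec⟩ := hconvA p.2 hp.2 b' hb' (p.1 : EReal)
      (by exact_mod_cast hp.1)
    refine ⟨c, hc, fun s => ?_⟩
    have h1 := hcspec s
    rw [← EReal.coe_add, ← ereal_coe_max] at h1
    have h2 : (c : T → ℝ) s = max (p.1 + (p.2 : T → ℝ) s) ((b' : T → ℝ) s) :=
      EReal.coe_injective h1
    simp only [List.map_cons, List.foldr_cons, ← hspec s]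
    exact h2

open Classical in
/-- Let `K ⊆ ℝ^T` be a compact max-plus convex subset with
idempotent barycenter map `β_K` (determined by `pr_t (β_K ν) = ν(f_t)`), and let
`A ⊆ K` be closed.  Then `conv_I(A) = A` if and only if `A` is max-plus convex.
Here `conv_I(∅) = ∅` and, for `A ≠ ∅`,
`conv_I(A) = β_K(A⁺)` with `A⁺ = (Iχ_A)⁻¹(η(K/A)(a))`, i.e. `A⁺` is the set of
`ν ∈ IK` with `ν(ψ ∘ χ_A) = ψ(a)` for all `ψ ∈ C(K/A)`, where `χ_A : K → K/A`
collapses `A` to the point `a = χ_A(x₀)`, `x₀ ∈ A`. -/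
theorem stmt19 {T : Type*} (K : Set (T → ℝ)) (hK : IsCompact K)
    (hKconv : MaxPlusConvexSet K)
    (β : C(IspX ↥K, ↥K))
    (hβ : ∀ (ν : IspX ↥K) (t : T), ((β ν : ↥K) : T → ℝ) t = ν.1 (coordMap K t))
    (A : Set ↥K) (hA : IsClosed A) :
    (if A = ∅ then (∅ : Set ↥K)
     else ⇑β '' {ν : IspX ↥K | ∀ x₀ ∈ A, ∀ ψ : C(QuotSp A, ℝ),
        ν.1 (ψ.comp (qmkC A)) = ψ (qmk A x₀)}) = A ↔
    (∀ a ∈ A, ∀ b ∈ A, ∀ l : EReal, l ≤ 0 →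
      ∃ c ∈ A, ∀ t : T,
        ((c : T → ℝ) t : EReal) = (l + ((a : T → ℝ) t : EReal)) ⊔ ((b : T → ℝ) t : EReal)) := by
    classical
  by_cases hAe : A = ∅
  · subst hAe
    simp
  · rw [if_neg hAe]
    obtain ⟨x₀, hx₀⟩ := Set.nonempty_iff_ne_empty.mpr hAe
    haveI hCS : CompactSpace ↥K := isCompact_iff_compactSpace.mp hK
    constructor
    · -- conv_I(A) = A → max-plus convexity of A
      intro hconv a ha b hb l hl
      rcases eq_or_ne l ⊥ with rfl | hbot
      · -- l = ⊥ : use the Dirac measure at b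
        have hμI : IsIdempotentMeasure (fun φ : C(↥K, ℝ) => φ b) :=
          ⟨rfl, fun l φ => rfl, fun ψ φ => rfl⟩
        have hmem : (⟨_, hμI⟩ : IspX ↥K) ∈
            {ν : IspX ↥K | ∀ x₁ ∈ A, ∀ ψ : C(QuotSp A, ℝ),
              ν.1 (ψ.comp (qmkC A)) = ψ (qmk A x₁)} := by
          intro y hy ψ
          show ψ (qmk A b) = ψ (qmk A y)
          exact congrArg ψ (Quotient.sound (Or.inr ⟨hb, hy⟩))
        have hcA : β ⟨_, hμI⟩ ∈ A := hconv ▸ Set.mem_image_of_mem _ hmem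
        refine ⟨β ⟨_, hμI⟩, hcA, fun t => ?_⟩
        have hco : ((β (⟨_, hμI⟩ : IspX ↥K) : ↥K) : T → ℝ) t = (b : T → ℝ) t := hβ _ t
        rw [hco, EReal.bot_add, bot_sup_eq]
      · -- l real
        have htop : l ≠ ⊤ := by
          intro h
          rw [h] at hl
          exact absurd hl (by simp)
        have hlcoe : ((l.toReal : ℝ) : EReal) = l := EReal.coe_toReal htop hbot
        set lam : ℝ := l.toReal with hlamdef
        have hlam : lam ≤ 0 := by
          have : (lam : EReal) ≤ ((0 : ℝ) : EReal) := by
            rw [hlcoe]; exact_mod_cast hl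
          exact_mod_cast this
        have hμI : IsIdempotentMeasure (fun φ : C(↥K, ℝ) => max (lam + φ a) (φ b)) := by
          refine ⟨?_, ?_, ?_⟩
          · show max (lam + (1 : C(↥K, ℝ)) a) ((1 : C(↥K, ℝ)) b) = 1
            simp only [ContinuousMap.one_apply]
            exact max_eq_right (by linarith)
          · intro r φ
            show max (lam + (ContinuousMap.const ↥K r + φ) a)
                ((ContinuousMap.const ↥K r + φ) b) = r + max (lam + φ a) (φ b)
            simp only [ContinuousMap.add_apply, ContinuousMap.const_apply]
            rw [show lam + (r + φ a) = r + (lam + φ a) by ring, max_add_add_left]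
          · intro ψ φ
            show max (lam + (ψ ⊔ φ) a) ((ψ ⊔ φ) b)
              = max (max (lam + ψ a) (ψ b)) (max (lam + φ a) (φ b))
            simp only [ContinuousMap.sup_apply]
            rw [← max_add_add_left, max_max_max_comm]
        have hmem : (⟨_, hμI⟩ : IspX ↥K) ∈
            {ν : IspX ↥K | ∀ x₁ ∈ A, ∀ ψ : C(QuotSp A, ℝ),
              ν.1 (ψ.comp (qmkC A)) = ψ (qmk A x₁)} := by
          intro y hy ψ
          show max (lam + ψ (qmk A a)) (ψ (qmk A b)) = ψ (qmk A y)
          have e1 : qmk A a = qmk A y := Quotient.sound (Or.inr ⟨ha, hy⟩)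
          have e2 : qmk A b = qmk A y := Quotient.sound (Or.inr ⟨hb, hy⟩)
          rw [e1, e2]
          exact max_eq_right (by linarith)
        have hcA : β ⟨_, hμI⟩ ∈ A := hconv ▸ Set.mem_image_of_mem _ hmem
        refine ⟨β ⟨_, hμI⟩, hcA, fun t => ?_⟩
        have hco : ((β (⟨_, hμI⟩ : IspX ↥K) : ↥K) : T → ℝ) t
            = max (lam + (a : T → ℝ) t) ((b : T → ℝ) t) := hβ _ t
        rw [hco, ereal_coe_max, EReal.coe_add, hlcoe]
    · -- max-plus convexity → conv_I(A) = A
      intro hconvA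
      apply Set.Subset.antisymm
      · rintro c ⟨ν, hν, rfl⟩
        have hν0 : ∀ φ : C(↥K, ℝ), (∀ x ∈ A, φ x = 0) → ν.1 φ = 0 :=
          fun φ hφ => im_factor hν hx₀ φ hφ
        have hsel : ∀ (φ : C(↥K, ℝ)) (ε : ℝ), 0 < ε →
            ∃ x : ↥K, x ∈ A ∧ ∀ ψ : C(↥K, ℝ), ψ x ≤ φ x + ν.1 ψ - ν.1 φ + ε := by
          intro φ ε hε
          have hfin : ∀ u : Finset C(↥K, ℝ),
              (Set.univ ∩ ⋂ ψ ∈ u,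
                {x : ↥K | ψ x ≤ φ x + ν.1 ψ - ν.1 φ + ε}).Nonempty := by
            intro u
            rcases u.eq_empty_or_nonempty with rfl | hu
            · exact ⟨x₀, Set.mem_univ _, by simp⟩
            by_contra hcon
            rw [Set.not_nonempty_iff_eq_empty] at hcon
            have hall : ∀ x : ↥K, ∃ ψ ∈ u, φ x + ν.1 ψ - ν.1 φ + ε < ψ x := by
              intro x
              by_contra h2
              push_neg at h2
              have hxm : x ∈ Set.univ ∩ ⋂ ψ ∈ u,
                  {x : ↥K | ψ x ≤ φ x + ν.1 ψ - ν.1 φ + ε} :=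
                ⟨Set.mem_univ _, Set.mem_iInter₂.mpr fun ψ hψ => h2 ψ hψ⟩
              rw [hcon] at hxm
              exact hxm
            set ρ : C(↥K, ℝ) :=
              u.sup' hu (fun ψ => ψ + ContinuousMap.const _ (ν.1 φ - ν.1 ψ - ε)) with hρ
            have hval : ∀ ψ ∈ u,
                ν.1 (ψ + ContinuousMap.const _ (ν.1 φ - ν.1 ψ - ε)) = ν.1 φ - ε := by
              intro ψ _
              rw [im_add_const ν.2]; ring
            have hρν : ν.1 ρ = ν.1 φ - ε := by
              rw [hρ, im_sup' ν.2 hu]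
              apply le_antisymm
              · exact Finset.sup'_le hu _ fun ψ hψ => le_of_eq (hval ψ hψ)
              · obtain ⟨ψ, hψ⟩ := hu
                calc ν.1 φ - ε
                    = ν.1 (ψ + ContinuousMap.const _ (ν.1 φ - ν.1 ψ - ε)) := (hval ψ hψ).symm
                  _ ≤ _ := Finset.le_sup'
                      (fun i => ν.1 (i + ContinuousMap.const ↥K (ν.1 φ - ν.1 i - ε))) hψ
            have hφρ : φ ≤ ρ := by
              rw [ContinuousMap.le_def]
              intro x
              obtain ⟨ψ, hψu, hψx⟩ := hall x
              have h6 : (fun ψ : C(↥K, ℝ) =>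
                  ψ + ContinuousMap.const ↥K (ν.1 φ - ν.1 ψ - ε)) ψ ≤ ρ :=
                Finset.le_sup'
                  (fun i : C(↥K, ℝ) => i + ContinuousMap.const ↥K (ν.1 φ - ν.1 i - ε)) hψu
              have h7 : ψ x + (ν.1 φ - ν.1 ψ - ε) ≤ ρ x := by
                simpa using ContinuousMap.le_def.mp h6 x
              linarith
            have hmono := im_mono ν.2 hφρ
            rw [hρν] at hmono
            linarith
          obtain ⟨x, hxuniv, hxI⟩ :=
            isCompact_univ.inter_iInter_nonempty
              (fun ψ : C(↥K, ℝ) => {x : ↥K | ψ x ≤ φ x + ν.1 ψ - ν.1 φ + ε})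
              (fun ψ => isClosed_le (map_continuous ψ)
                (((map_continuous φ).add continuous_const).sub continuous_const
                  |>.add continuous_const)) hfin
          have hx2 : ∀ ψ : C(↥K, ℝ), ψ x ≤ φ x + ν.1 ψ - ν.1 φ + ε :=
            fun ψ => Set.mem_iInter.mp hxI ψ
          have hr0 : 0 ≤ φ x - ν.1 φ + ε := by
            have h0 := hx2 (ContinuousMap.const _ 0)
            rw [im_const ν.2] at h0
            simp only [ContinuousMap.const_apply] at h0
            linarith
          have hxA : x ∈ A := by
            by_contra hxnA
            obtain ⟨f, hf0, hf1, hf01⟩ := exists_continuous_zero_one_of_isClosed hA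
              isClosed_singleton (Set.disjoint_singleton_right.mpr hxnA)
            set M : ℝ := φ x - ν.1 φ + ε + 1 with hM
            have hνf : ν.1 (M • f) = 0 := hν0 (M • f) fun y hy => by
              have hfy : f y = 0 := hf0 hy
              simp [hfy]
            have h8 := hx2 (M • f)
            rw [hνf] at h8
            have h9 : (M • f) x = M := by
              have hfx : f x = 1 := hf1 rfl
              simp [hfx]
            rw [h9, hM] at h8
            linarith
          exact ⟨x, hxA, hx2⟩
        set c : ↥K := β ν with hcdef
        have hct : ∀ t, ν.1 (coordMap K t) = (c : T → ℝ) t := fun t => (hβ ν t).symm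
        have hZcl : ∀ p : T × ℕ, IsClosed
            {x : ↥K | |(x : T → ℝ) p.1 - (c : T → ℝ) p.1| ≤ 1 / ((p.2 : ℝ) + 1)} := by
          intro p
          apply isClosed_le _ continuous_const
          exact (((continuous_apply p.1).comp continuous_subtype_val).sub
            continuous_const).abs
        have hfin2 : ∀ u : Finset (T × ℕ),
            (A ∩ ⋂ p ∈ u,
              {x : ↥K | |(x : T → ℝ) p.1 - (c : T → ℝ) p.1| ≤ 1 / ((p.2 : ℝ) + 1)}).Nonempty := by
          intro u
          set N : ℕ := u.sup Prod.snd with hN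
          set ε : ℝ := 1 / ((N : ℝ) + 1) with hεdef
          have hε : 0 < ε := by positivity
          obtain ⟨xs, hxsA, hxs⟩ := hsel (ContinuousMap.const _ 0) ε hε
          choose xt hxtA hxt using fun t : T => hsel (coordMap K t) ε hε
          have hcoord : ∀ (t : T) (y : ↥K), (coordMap K t) y = (y : T → ℝ) t :=
            fun _ _ => rfl
          have hxs' : ∀ s : T, (xs : T → ℝ) s ≤ (c : T → ℝ) s + ε := by
            intro s
            have h := hxs (coordMap K s)
            rw [im_const ν.2, hct s, hcoord] at h
            simp only [ContinuousMap.const_apply] at h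
            linarith
          have hxt1 : ∀ t s : T, (xt t : T → ℝ) s
              ≤ (xt t : T → ℝ) t + (c : T → ℝ) s - (c : T → ℝ) t + ε := by
            intro t s
            have h := hxt t (coordMap K s)
            rw [hct s, hct t, hcoord, hcoord] at h
            linarith
          have hlam : ∀ t : T, (c : T → ℝ) t - (xt t : T → ℝ) t - ε ≤ 0 := by
            intro t
            have h := hxt t (ContinuousMap.const _ 0)
            rw [im_const ν.2, hct t, hcoord] at h
            simp only [ContinuousMap.const_apply] at h
            linarith
          set F : Finset T := u.image Prod.fst with hF
          set L : List (ℝ × ↥K) :=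
            F.toList.map (fun t => ((c : T → ℝ) t - (xt t : T → ℝ) t - ε, xt t)) with hLdef
          have hLmem : ∀ p ∈ L, p.1 ≤ 0 ∧ p.2 ∈ A := by
            intro p hp
            rw [hLdef, List.mem_map] at hp
            obtain ⟨t, -, rfl⟩ := hp
            exact ⟨hlam t, hxtA t⟩
          obtain ⟨b, hbA, hbspec⟩ := combo_mem hconvA L hLmem hxsA
          refine ⟨b, hbA, Set.mem_iInter₂.mpr fun p hp => ?_⟩
          obtain ⟨t, n⟩ := p
          have htF : t ∈ F := Finset.mem_image.mpr ⟨(t, n), hp, rfl⟩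
          have hnε : ε ≤ 1 / ((n : ℝ) + 1) := by
            have hn : n ≤ N := Finset.le_sup (f := Prod.snd) hp
            rw [hεdef]
            apply one_div_le_one_div_of_le
            · positivity
            · exact_mod_cast Nat.succ_le_succ hn
          have hub : (b : T → ℝ) t ≤ (c : T → ℝ) t + ε := by
            rw [hbspec t]
            apply foldr_max_le (hxs' t)
            intro r hr
            rw [hLdef, List.map_map, List.mem_map] at hr
            obtain ⟨t', -, rfl⟩ := hr
            have h := hxt1 t' t
            simp only [Function.comp_apply]
            linarith
          have hlb : (c : T → ℝ) t - ε ≤ (b : T → ℝ) t := by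
            have hmem2 : ((c : T → ℝ) t - (xt t : T → ℝ) t - ε + (xt t : T → ℝ) t)
                ∈ L.map (fun p => p.1 + (p.2 : T → ℝ) t) :=
              List.mem_map.mpr ⟨((c : T → ℝ) t - (xt t : T → ℝ) t - ε, xt t),
                by rw [hLdef]; exact List.mem_map.mpr ⟨t, Finset.mem_toList.mpr htF, rfl⟩, rfl⟩
            have h := le_foldr_max_of_mem (b := (xs : T → ℝ) t) hmem2
            rw [← hbspec t] at h
            linarith
          show |(b : T → ℝ) t - (c : T → ℝ) t| ≤ 1 / ((n : ℝ) + 1)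
          rw [abs_le]
          constructor <;> linarith
        obtain ⟨x, hxA, hxI⟩ := hA.isCompact.inter_iInter_nonempty _ hZcl hfin2
        have hxc : x = c := by
          apply Subtype.ext; funext t
          have h1 : ∀ n : ℕ, |(x : T → ℝ) t - (c : T → ℝ) t| ≤ 1 / ((n : ℝ) + 1) :=
            fun n => Set.mem_iInter.mp hxI (t, n)
          by_contra hne
          have habs : 0 < |(x : T → ℝ) t - (c : T → ℝ) t| :=
            abs_pos.mpr (sub_ne_zero.mpr hne)
          obtain ⟨n, hn⟩ := exists_nat_one_div_lt habs
          exact absurd (h1 n) (not_le.mpr hn)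
        exact hxc ▸ hxA
      · intro x hx
        have hdI : IsIdempotentMeasure (fun φ : C(↥K, ℝ) => φ x) :=
          ⟨rfl, fun l φ => rfl, fun ψ φ => rfl⟩
        refine ⟨⟨_, hdI⟩, ?_, ?_⟩
        · intro y hy ψ
          exact congrArg ψ (Quotient.sound (Or.inr ⟨hx, hy⟩))
        · exact Subtype.ext (funext fun t => by rw [hβ ⟨_, hdI⟩ t]; rfl)
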